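/- Let G be a graph of treewidth at most k and let W be a set of vertices of G. Then there exists a set S of at most k+1 vertices of G such that every connected component of G − S contains at most |W|/2 vertices of W. -/

import Mathlib

open SimpleGraph

/-- A rooted tree decomposition of a graph `G` with node type `ι`. -/
structure RootedTD (V : Type) (G : SimpleGraph V) (ι : Type) where
  T : SimpleGraph ι
  tree : T.IsTree
  bag : ι → Finset V
  root : ι
  parent : ι → ι
  parent_root : parent root = root
  parent_adj : ∀ x, x ≠ root → T.Adj x (parent x)
  parent_reach : ∀ x, ∃ n, parent^[n] x = root
  vert_cover : ∀ v, ∃ x, v ∈ bag x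
  edge_cover : ∀ ⦃u v⦄, G.Adj u v → ∃ x, u ∈ bag x ∧ v ∈ bag x
  conn : ∀ (v : V) (x y : ι) (w : T.Walk x y), w.IsPath →
      v ∈ bag x → v ∈ bag y → ∀ z ∈ w.support, v ∈ bag z

/-- The treewidth of G is at most k. -/
def treewidthLE (V : Type) (G : SimpleGraph V) (k : ℕ) : Prop :=
  ∃ (m : ℕ) (D : RootedTD V G (Fin m)), ∀ x, (D.bag x).card ≤ k + 1


/-- The graph G with the vertices of S deleted (kept on the same vertex type,
with vertices of S isolated). -/
def deleteVerts {V : Type} (G : SimpleGraph V) (S : Finset V) : SimpleGraph V where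
  Adj u v := G.Adj u v ∧ u ∉ S ∧ v ∉ S
  symm := ⟨fun u v h => ⟨h.1.symm, h.2.2, h.2.1⟩⟩
  loopless := ⟨fun v h => G.loopless.1 v h.1⟩

namespace RootedTD

variable {V : Type} {G : SimpleGraph V} {ι : Type} (D : RootedTD V G ι)

/-- `y` lies in the subtree rooted at `x`. -/
def Sub (x y : ι) : Prop := ∃ n, D.parent^[n] y = x

open Classical in
/-- distance from `y` up to `x` (junk if not in subtree). -/
noncomputable def dist (x y : ι) : ℕ :=
  if h : D.Sub x y then Nat.find h else 0

/-- the child of `x` on the path from `y` up to `x`. -/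
noncomputable def child (x y : ι) : ι := D.parent^[D.dist x y - 1] y

lemma dist_spec {x y : ι} (h : D.Sub x y) : D.parent^[D.dist x y] y = x := by
  classical
  rw [dist, dif_pos h]
  exact Nat.find_spec h

lemma dist_min {x y : ι} (h : D.Sub x y) {n : ℕ} (hn : D.parent^[n] y = x) :
    D.dist x y ≤ n := by
  classical
  rw [dist, dif_pos h]
  exact Nat.find_min' h hn

lemma dist_pos {x y : ι} (h : D.Sub x y) (hne : y ≠ x) : 1 ≤ D.dist x y := by
  rcases Nat.eq_zero_or_pos (D.dist x y) with h0 | h1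
  · have := D.dist_spec h
    rw [h0] at this
    exact absurd this hne
  · exact h1

lemma sub_self (x : ι) : D.Sub x x := ⟨0, rfl⟩

lemma sub_parent {x y : ι} (h : D.Sub x y) (hne : y ≠ x) : D.Sub x (D.parent y) := by
  refine ⟨D.dist x y - 1, ?_⟩
  rw [← Function.iterate_succ_apply, Nat.succ_eq_add_one,
    Nat.sub_add_cancel (D.dist_pos h hne)]
  exact D.dist_spec h

lemma parent_iterate_root (n : ℕ) : D.parent^[n] D.root = D.root := by
  induction n with
  | zero => rfl
  | succ n ih => rw [Function.iterate_succ_apply', ih, D.parent_root]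

lemma eq_root_of_periodic {x : ι} {p : ℕ} (hp : 1 ≤ p) (h : D.parent^[p] x = x) :
    x = D.root := by
  obtain ⟨n, hn⟩ := D.parent_reach x
  have key : ∀ k, D.parent^[k * p] x = x := by
    intro k
    induction k with
    | zero => simp
    | succ k ih =>
      rw [Nat.succ_mul, Function.iterate_add_apply, h, ih]
  have hge : n ≤ n * p := Nat.le_mul_of_pos_right n hp
  obtain ⟨d, hd⟩ := Nat.exists_eq_add_of_le hge
  have : D.parent^[n * p] x = D.root := by
    rw [hd, Nat.add_comm, Function.iterate_add_apply, hn, D.parent_iterate_root]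
  rw [key n] at this
  exact this

lemma adj_parent [Fintype ι] [DecidableEq ι] {y z : ι} (hadj : D.T.Adj y z) :
    D.parent y = z ∨ D.parent z = y := by
  classical
  set f : ι → Sym2 ι := fun a => s(a, D.parent a) with hf
  set N : Finset ι := Finset.univ.erase D.root with hN
  have hinj : Set.InjOn f ↑N := by
    intro a ha b hb hab
    simp only [hf, Sym2.eq, Sym2.rel_iff', Prod.mk.injEq, Prod.swap_prod_mk] at hab
    rcases hab with ⟨h1, _⟩ | ⟨h1, h2⟩
    · exact h1
    · exfalso
      have hcyc : D.parent^[2] a = a := by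
        show D.parent (D.parent a) = a
        rw [h2, ← h1]
      have := D.eq_root_of_periodic (by norm_num) hcyc
      exact (Finset.mem_erase.mp ha).1 this
  have himg : N.image f ⊆ D.T.edgeFinset := by
    intro e he
    obtain ⟨a, ha, rfl⟩ := Finset.mem_image.mp he
    rw [mem_edgeFinset, mem_edgeSet]
    exact D.parent_adj a (Finset.mem_erase.mp ha).1
  have hcard1 : (N.image f).card = N.card := Finset.card_image_of_injOn hinj
  have hroot_mem : D.root ∈ (Finset.univ : Finset ι) := Finset.mem_univ _
  have hNcard : N.card = Fintype.card ι - 1 := by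
    rw [hN, Finset.card_erase_of_mem hroot_mem, Finset.card_univ]
  have hedge : D.T.edgeFinset.card + 1 = Fintype.card ι := D.tree.card_edgeFinset
  have hpos : 0 < Fintype.card ι := Fintype.card_pos_iff.mpr ⟨D.root⟩
  have heq : N.image f = D.T.edgeFinset := by
    apply Finset.eq_of_subset_of_card_le himg
    rw [hcard1, hNcard]
    omega
  have hmem : s(y, z) ∈ N.image f := by
    rw [heq, mem_edgeFinset, mem_edgeSet]
    exact hadj
  obtain ⟨a, _, hae⟩ := Finset.mem_image.mp hmem
  simp only [hf, Sym2.eq, Sym2.rel_iff', Prod.mk.injEq, Prod.swap_prod_mk] at hae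
  rcases hae with ⟨h1, h2⟩ | ⟨h1, h2⟩
  · left; rw [← h1]; exact h2
  · right; rw [← h1]; exact h2

lemma sub_of_adj [Fintype ι] [DecidableEq ι] {x y z : ι} (h : D.T.Adj y z)
    (hy : D.Sub x y) (hyx : y ≠ x) : D.Sub x z := by
  rcases D.adj_parent h with hp | hp
  · rw [← hp]; exact D.sub_parent hy hyx
  · obtain ⟨n, hn⟩ := hy
    exact ⟨n + 1, by rw [Function.iterate_succ_apply, hp, hn]⟩

lemma child_eq_of_parent {x y : ι} (hy : D.Sub x y) (hyx : y ≠ x)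
    (hpx : D.parent y ≠ x) : D.child x (D.parent y) = D.child x y := by
  have hz : D.Sub x (D.parent y) := D.sub_parent hy hyx
  have hdy := D.dist_spec hy
  have hdy1 : 1 ≤ D.dist x y := D.dist_pos hy hyx
  have h1 : D.dist x (D.parent y) ≤ D.dist x y - 1 := by
    apply D.dist_min hz
    rw [← Function.iterate_succ_apply, Nat.succ_eq_add_one, Nat.sub_add_cancel hdy1]
    exact hdy
  have h2 : D.dist x y ≤ D.dist x (D.parent y) + 1 := by
    apply D.dist_min hy
    rw [Function.iterate_succ_apply]
    exact D.dist_spec hz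
  have hdz1 : 1 ≤ D.dist x (D.parent y) := D.dist_pos hz hpx
  have heq : D.dist x (D.parent y) = D.dist x y - 1 := by omega
  obtain ⟨a, ha⟩ : ∃ a, D.dist x y = a + 2 := ⟨D.dist x y - 2, by omega⟩
  show D.parent^[D.dist x (D.parent y) - 1] (D.parent y) = D.parent^[D.dist x y - 1] y
  rw [heq, ha]
  show D.parent^[a] (D.parent y) = D.parent^[a + 1] y
  exact (Function.iterate_succ_apply _ _ _).symm

lemma child_eq_of_adj [Fintype ι] [DecidableEq ι] {x y z : ι} (h : D.T.Adj y z)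
    (hy : D.Sub x y) (hyx : y ≠ x) (hz : D.Sub x z) (hzx : z ≠ x) :
    D.child x y = D.child x z := by
  rcases D.adj_parent h with hp | hp
  · rw [← hp] at hz hzx ⊢
    exact (D.child_eq_of_parent hy hyx hzx).symm
  · rw [← hp] at hy hyx ⊢
    exact D.child_eq_of_parent hz hzx hyx

lemma walk_sub [Fintype ι] [DecidableEq ι] {x y z : ι} (p : D.T.Walk y z)
    (hsup : ∀ a ∈ p.support, a ≠ x) (hy : D.Sub x y) : D.Sub x z := by
  induction p with
  | nil => exact hy
  | @cons a b c h p ih =>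
    apply ih
    · intro u hu
      exact hsup u (by simp [hu])
    · exact D.sub_of_adj h hy (hsup a (by simp))

lemma walk_child [Fintype ι] [DecidableEq ι] {x y z : ι} (p : D.T.Walk y z)
    (hsup : ∀ a ∈ p.support, D.Sub x a ∧ a ≠ x) : D.child x y = D.child x z := by
  induction p with
  | nil => rfl
  | @cons a b c h p ih =>
    have ha := hsup a (by simp)
    have hb := hsup b (by simp)
    rw [D.child_eq_of_adj h ha.1 ha.2 hb.1 hb.2]
    exact ih (fun u hu => hsup u (by simp [hu]))

lemma bag_walk [DecidableEq ι] {v : V} {y z : ι} (hy : v ∈ D.bag y) (hz : v ∈ D.bag z) :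
    ∃ p : D.T.Walk y z, ∀ a ∈ p.support, v ∈ D.bag a := by
  have hr : D.T.Reachable y z := D.tree.isConnected.preconnected y z
  obtain ⟨w⟩ := hr
  refine ⟨w.toPath.1, ?_⟩
  intro a ha
  exact D.conn v y z w.toPath.1 w.toPath.2 hy hz a ha

lemma bag_sub [Fintype ι] [DecidableEq ι] {v : V} {x y z : ι} (hvx : v ∉ D.bag x)
    (hy : v ∈ D.bag y) (hz : v ∈ D.bag z) (hsy : D.Sub x y) : D.Sub x z := by
  obtain ⟨p, hp⟩ := D.bag_walk hy hz
  exact D.walk_sub p (fun a ha hax => hvx (hax ▸ hp a ha)) hsy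

lemma bag_child [Fintype ι] [DecidableEq ι] {v : V} {x y z : ι} (hvx : v ∉ D.bag x)
    (hy : v ∈ D.bag y) (hz : v ∈ D.bag z) (hsy : D.Sub x y) :
    D.child x y = D.child x z := by
  obtain ⟨p, hp⟩ := D.bag_walk hy hz
  refine D.walk_child p (fun a ha => ⟨?_, ?_⟩)
  · exact D.bag_sub hvx hy (hp a ha) hsy
  · intro hax
    exact hvx (hax ▸ hp a ha)

lemma parent_child {x y : ι} (h : D.Sub x y) (hne : y ≠ x) :
    D.parent (D.child x y) = x := by
  show D.parent (D.parent^[D.dist x y - 1] y) = x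
  rw [← Function.iterate_succ_apply' D.parent, Nat.succ_eq_add_one,
    Nat.sub_add_cancel (D.dist_pos h hne)]
  exact D.dist_spec h

lemma child_ne {x y : ι} (h : D.Sub x y) (hne : y ≠ x) : D.child x y ≠ x := by
  intro hc
  have : D.dist x y ≤ D.dist x y - 1 := D.dist_min h hc
  have := D.dist_pos h hne
  omega

lemma sub_child {x y : ι} (h : D.Sub x y) (hne : y ≠ x) : D.Sub x (D.child x y) :=
  ⟨1, by simpa using D.parent_child h hne⟩

end RootedTD

/-- balanced separator lemma.  If G has treewidth at most k and W is a
set of vertices, there is a set S of at most k+1 vertices such that every connected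
component of G - S contains at most |W|/2 vertices of W. -/
theorem stmt3 {V : Type} [Fintype V] [DecidableEq V] (G : SimpleGraph V) (k : ℕ)
    (htw : treewidthLE V G k) (W : Finset V) :
    ∃ S : Finset V, S.card ≤ k + 1 ∧
      ∀ v, v ∉ S →
        2 * Set.ncard {w | w ∈ W ∧ w ∉ S ∧ (deleteVerts G S).Reachable v w} ≤ W.card := by
  classical
  by_cases hW : W.card = 0
  · refine ⟨∅, by simp, ?_⟩
    intro v _
    have hWe : W = ∅ := Finset.card_eq_zero.mp hW
    have : {w | w ∈ W ∧ w ∉ (∅ : Finset V) ∧ (deleteVerts G ∅).Reachable v w} = ∅ := by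
      ext w
      simp [hWe]
    rw [this]
    simp
  obtain ⟨m, D, hbagcard⟩ := htw
  set weight : Fin m → ℕ :=
    fun x => (W.filter (fun w => ∀ y, w ∈ D.bag y → D.Sub x y)).card with hweight
  set subF : Fin m → Finset (Fin m) :=
    fun x => Finset.univ.filter (fun y => D.Sub x y) with hsubF
  have hroot : W.card < 2 * weight D.root := by
    have hwr : weight D.root = W.card := by
      show (W.filter (fun w => ∀ y, w ∈ D.bag y → D.Sub D.root y)).card = W.card
      rw [Finset.filter_true_of_mem (fun w _ y _ => D.parent_reach y)]
    omega
  set cand : Finset (Fin m) := Finset.univ.filter (fun x => W.card < 2 * weight x)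
    with hcand
  have hcne : cand.Nonempty :=
    ⟨D.root, by simp [hcand, hroot]⟩
  obtain ⟨x, hxmem, hxmin⟩ := Finset.exists_min_image cand (fun x => (subF x).card) hcne
  have hxw : W.card < 2 * weight x := by
    rw [hcand] at hxmem
    exact (Finset.mem_filter.mp hxmem).2
  -- key counting fact for children of x
  have fact_child : ∀ c : Fin m, c ≠ x → D.parent c = x → 2 * weight c ≤ W.card := by
    intro c hcx hpc
    by_contra hlt
    push_neg at hlt
    have hcmem : c ∈ cand := by simp [hcand]; omega
    have hsub : subF c ⊆ subF x := by
      intro y hy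
      rw [hsubF, Finset.mem_filter] at hy ⊢
      obtain ⟨n, hn⟩ := hy.2
      exact ⟨Finset.mem_univ _, n + 1, by rw [Function.iterate_succ_apply', hn, hpc]⟩
    have hxnot : x ∉ subF c := by
      rw [hsubF, Finset.mem_filter]
      rintro ⟨-, n, hn⟩
      have hper : D.parent^[n + 1] x = x := by
        rw [Function.iterate_succ_apply', hn, hpc]
      have hxr : x = D.root := D.eq_root_of_periodic (by omega) hper
      have : c = D.root := by rw [← hn, hxr, D.parent_iterate_root]
      exact hcx (this.trans hxr.symm)
    have hssub : subF c ⊂ subF x := by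
      refine ⟨hsub, fun hle => hxnot (hle ?_)⟩
      rw [hsubF, Finset.mem_filter]
      exact ⟨Finset.mem_univ _, D.sub_self x⟩
    have := Finset.card_lt_card hssub
    have := hxmin c hcmem
    omega
  refine ⟨D.bag x, hbagcard x, ?_⟩
  intro v hv
  set S : Finset V := D.bag x with hS
  obtain ⟨y₀, hy₀⟩ := D.vert_cover v
  have hwle : weight x ≤ W.card := Finset.card_filter_le _ _
  by_cases hcase : D.Sub x y₀
  · -- Down case: all reachable vertices live in the subtree of child x y₀
    have hy₀x : y₀ ≠ x := by
      intro h
      exact hv (show v ∈ D.bag x from h ▸ hy₀)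
    set c : Fin m := D.child x y₀ with hc
    have hccard : 2 * weight c ≤ W.card :=
      fact_child c (D.child_ne hcase hy₀x) (D.parent_child hcase hy₀x)
    have inv : ∀ {a b : V} (_ : (deleteVerts G S).Walk a b),
        (∃ y, a ∈ D.bag y ∧ D.Sub x y ∧ D.child x y = c) →
        (∃ y, b ∈ D.bag y ∧ D.Sub x y ∧ D.child x y = c) := by
      intro a b p
      induction p with
      | nil => exact id
      | @cons a b' c' h p ih =>
        rintro ⟨y₁, hay₁, hsy₁, hcy₁⟩
        obtain ⟨hG, haS, hbS⟩ := (h : G.Adj a b' ∧ a ∉ S ∧ b' ∉ S)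
        obtain ⟨y, hya, hyb⟩ := D.edge_cover hG
        apply ih
        have haSx : a ∉ D.bag x := haS
        have hsy : D.Sub x y := D.bag_sub haSx hay₁ hya hsy₁
        have hcy : D.child x y = c := (D.bag_child haSx hay₁ hya hsy₁) ▸ hcy₁
        exact ⟨y, hyb, hsy, hcy⟩
    have hRsub : {w | w ∈ W ∧ w ∉ S ∧ (deleteVerts G S).Reachable v w} ⊆
        ↑(W.filter (fun w => ∀ y, w ∈ D.bag y → D.Sub c y)) := by
      rintro w ⟨hwW, hwS, hreach⟩
      obtain ⟨p⟩ := hreach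
      obtain ⟨y₁, hwy₁, hsy₁, hcy₁⟩ := inv p ⟨y₀, hy₀, hcase, rfl⟩
      rw [Finset.coe_filter]
      refine ⟨hwW, fun y hy => ?_⟩
      have hwSx : w ∉ D.bag x := hwS
      have hsy : D.Sub x y := D.bag_sub hwSx hwy₁ hy hsy₁
      have hcy : D.child x y = c := (D.bag_child hwSx hwy₁ hy hsy₁) ▸ hcy₁
      have hyne : y ≠ x := fun h => hwSx (h ▸ hy)
      exact ⟨D.dist x y - 1, hcy⟩
    have hkard := Set.ncard_le_ncard hRsub (Finset.finite_toSet _)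
    rw [Set.ncard_coe_finset] at hkard
    have : (W.filter (fun w => ∀ y, w ∈ D.bag y → D.Sub c y)).card = weight c := rfl
    omega
  · -- Up case: all reachable vertices have a bag outside the subtree of x
    have inv : ∀ {a b : V} (_ : (deleteVerts G S).Walk a b),
        (∃ y, a ∈ D.bag y ∧ ¬ D.Sub x y) → (∃ y, b ∈ D.bag y ∧ ¬ D.Sub x y) := by
      intro a b p
      induction p with
      | nil => exact id
      | @cons a b' c' h p ih =>
        rintro ⟨y₁, hay₁, hny₁⟩
        obtain ⟨hG, haS, hbS⟩ := (h : G.Adj a b' ∧ a ∉ S ∧ b' ∉ S)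
        obtain ⟨y, hya, hyb⟩ := D.edge_cover hG
        apply ih
        refine ⟨y, hyb, fun hsub => hny₁ ?_⟩
        exact D.bag_sub (show a ∉ D.bag x from haS) hya hay₁ hsub
    have hRsub : {w | w ∈ W ∧ w ∉ S ∧ (deleteVerts G S).Reachable v w} ⊆
        ↑(W.filter (fun w => ¬ ∀ y, w ∈ D.bag y → D.Sub x y)) := by
      rintro w ⟨hwW, hwS, hreach⟩
      obtain ⟨p⟩ := hreach
      obtain ⟨y₁, hwy₁, hny₁⟩ := inv p ⟨y₀, hy₀, hcase⟩
      rw [Finset.coe_filter]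
      exact ⟨hwW, fun hall => hny₁ (hall y₁ hwy₁)⟩
    have hkard := Set.ncard_le_ncard hRsub (Finset.finite_toSet _)
    rw [Set.ncard_coe_finset] at hkard
    have hsplit := Finset.card_filter_add_card_filter_not
      (s := W) (p := fun w => ∀ y, w ∈ D.bag y → D.Sub x y)
    have : (W.filter (fun w => ∀ y, w ∈ D.bag y → D.Sub x y)).card = weight x := rfl
    omega
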